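/- arXiv:0910.2736 — 5 statements merged into one kernel-verified Lean document; each statement's English description precedes it below -/
import Mathlib

section
/- Let a, b, x : ℕ → ℂ be sequences with b_i ≠ 0 for all i, and suppose x satisfies the second-order linear difference equation x_{n+2} = b_n·x_{n+1} + a_n·x_n for all n ∈ ℕ. Then for every n ≥ 2, x_n = (∏_{i=0}^{n-2} b_i) · ( x_1 · Σ_{S ∈ Sp(1, n-2)} g^S + x_0 · (a_0/b_0) · Σ_{S ∈ Sp(2, n-2)} g^S ). -/
open Finset

/-- A finite set of naturals is *sparse* if any two distinct elements differ by at least 2. -/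
def SparseSet (S : Finset ℕ) : Prop :=
  ∀ i ∈ S, ∀ j ∈ S, i < j → 2 ≤ j - i

/-- `Sp q m` is the collection of all sparse subsets of `{q, q+1, …, m}`. -/
def Sp (q m : ℕ) : Finset (Finset ℕ) :=
  (Finset.Icc q m).powerset.filter (fun S => ∀ i ∈ S, ∀ j ∈ S, i < j → 2 ≤ j - i)

/-- `g a b i = a i / (b (i-1) * b i)`. -/
noncomputable def g (a b : ℕ → ℂ) (i : ℕ) : ℂ := a i / (b (i - 1) * b i)

/-- `gProd a b S = ∏ i ∈ S, g a b i` (the empty product is 1). -/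
noncomputable def gProd (a b : ℕ → ℂ) (S : Finset ℕ) : ℂ := ∏ i ∈ S, g a b i

lemma mem_Sp {q m : ℕ} {S : Finset ℕ} :
    S ∈ Sp q m ↔ S ⊆ Finset.Icc q m ∧ ∀ i ∈ S, ∀ j ∈ S, i < j → 2 ≤ j - i := by
  simp [Sp, Finset.mem_filter, Finset.mem_powerset]

lemma Sp_of_lt (q m : ℕ) (h : m < q) : Sp q m = {∅} := by
  ext S
  rw [mem_Sp]
  rw [Finset.Icc_eq_empty (by omega : ¬ q ≤ m)]
  simp only [Finset.subset_empty, Finset.mem_singleton]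
  constructor
  · rintro ⟨rfl, -⟩; rfl
  · rintro rfl; exact ⟨rfl, by simp⟩

lemma T_of_lt (a b : ℕ → ℂ) (q m : ℕ) (h : m < q) :
    ∑ S ∈ Sp q m, gProd a b S = 1 := by
  rw [Sp_of_lt q m h]; simp [gProd]

lemma Sp_rec (q m : ℕ) (hq : 1 ≤ q) (hm : q ≤ m) :
    Sp q m = Sp q (m-1) ∪ (Sp q (m-2)).image (insert m) := by
  ext S
  simp only [Finset.mem_union, Finset.mem_image, mem_Sp]
  constructor
  · rintro ⟨hsub, hsp⟩
    by_cases hmS : m ∈ S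
    · right
      refine ⟨S.erase m, ⟨?_, ?_⟩, Finset.insert_erase hmS⟩
      · intro i hi
        have hi' := Finset.mem_of_mem_erase hi
        have h1 := hsub hi'
        simp only [Finset.mem_Icc] at h1 ⊢
        have hne : i ≠ m := Finset.ne_of_mem_erase hi
        have := hsp i hi' m hmS (by omega)
        omega
      · intro i hi j hj hij
        exact hsp i (Finset.mem_of_mem_erase hi) j (Finset.mem_of_mem_erase hj) hij
    · left
      refine ⟨?_, hsp⟩
      intro i hi
      have h1 := hsub hi
      simp only [Finset.mem_Icc] at h1 ⊢
      have : i ≠ m := fun h => hmS (h ▸ hi)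
      omega
  · rintro (⟨hsub, hsp⟩ | ⟨S', ⟨hsub, hsp⟩, rfl⟩)
    · refine ⟨fun i hi => ?_, hsp⟩
      have := hsub hi; simp only [Finset.mem_Icc] at this ⊢; omega
    · constructor
      · intro i hi
        rcases Finset.mem_insert.mp hi with rfl | hi'
        · simp only [Finset.mem_Icc]; omega
        · have := hsub hi'; simp only [Finset.mem_Icc] at this ⊢; omega
      · intro i hi j hj hij
        rcases Finset.mem_insert.mp hi with rfl | hi' <;>
          rcases Finset.mem_insert.mp hj with h | hj'
        · omega
        · have := hsub hj'; simp only [Finset.mem_Icc] at this; omega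
        · subst h; have := hsub hi'; simp only [Finset.mem_Icc] at this; omega
        · exact hsp i hi' j hj' hij

lemma Sp_disj (q m : ℕ) (hq : 1 ≤ q) (hm : 1 ≤ m) :
    Disjoint (Sp q (m-1)) ((Sp q (m-2)).image (insert m)) := by
  rw [Finset.disjoint_left]
  rintro S hS hS'
  rw [mem_Sp] at hS
  simp only [Finset.mem_image] at hS'
  obtain ⟨S', -, rfl⟩ := hS'
  have := hS.1 (Finset.mem_insert_self m S')
  simp only [Finset.mem_Icc] at this
  omega

lemma T_rec (a b : ℕ → ℂ) (q m : ℕ) (hq : 1 ≤ q) (hm : q ≤ m) :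
    ∑ S ∈ Sp q m, gProd a b S =
      (∑ S ∈ Sp q (m-1), gProd a b S) + g a b m * ∑ S ∈ Sp q (m-2), gProd a b S := by
  rw [Sp_rec q m hq hm, Finset.sum_union (Sp_disj q m hq (by omega))]
  congr 1
  rw [Finset.sum_image ?inj]
  case inj =>
    intro S hS S' hS' h
    have h1 : m ∉ S := by
      rw [Finset.mem_coe, mem_Sp] at hS; intro hh; have := hS.1 hh
      simp only [Finset.mem_Icc] at this; omega
    have h2 : m ∉ S' := by
      rw [Finset.mem_coe, mem_Sp] at hS'; intro hh; have := hS'.1 hh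
      simp only [Finset.mem_Icc] at this; omega
    have := congrArg (Finset.erase · m) h
    simpa [Finset.erase_insert h1, Finset.erase_insert h2] using this
  rw [Finset.mul_sum]
  apply Finset.sum_congr rfl
  intro S hS
  have hmS : m ∉ S := by
    rw [mem_Sp] at hS; intro hh; have := hS.1 hh
    simp only [Finset.mem_Icc] at this; omega
  rw [gProd, Finset.prod_insert hmS]; rfl

lemma aux_sol (a b x : ℕ → ℂ) (hb : ∀ i, b i ≠ 0)
    (hx : ∀ n, x (n + 2) = b n * x (n + 1) + a n * x n) :
    ∀ n, x (n + 2) = (∏ i ∈ Finset.range (n + 1), b i) *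
      (x 1 * ∑ S ∈ Sp 1 n, gProd a b S +
       x 0 * (a 0 / b 0) * ∑ S ∈ Sp 2 n, gProd a b S) := by
  intro n
  induction n using Nat.strong_induction_on with
  | _ n ih =>
    match n with
    | 0 =>
      rw [hx 0, T_of_lt a b 1 0 (by omega), T_of_lt a b 2 0 (by omega)]
      rw [show Finset.range (0+1) = {0} from rfl, Finset.prod_singleton]
      field_simp [hb 0]
    | 1 =>
      rw [hx 1, hx 0, T_rec a b 1 1 le_rfl le_rfl,
        T_of_lt a b 1 0 (by omega), T_of_lt a b 2 1 (by omega)]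
      rw [show Finset.range (1+1) = {0, 1} from rfl]
      rw [Finset.prod_insert (by simp), Finset.prod_singleton]
      unfold g
      field_simp [hb 0, hb 1]
      ring
    | (k+2) =>
      have h1 := ih (k+1) (by omega)
      have h2 := ih k (by omega)
      rw [hx (k+2), h1, h2,
        T_rec a b 1 (k+2) (by omega) (by omega),
        T_rec a b 2 (k+2) (by omega) (by omega)]
      rw [Finset.prod_range_succ (f := b) (n := k+2),
        Finset.prod_range_succ (f := b) (n := k+1)]
      unfold g
      rw [show k + 2 - 1 = k + 1 by omega, show k + 2 - 2 = k by omega]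
      field_simp [hb (k+1), hb (k+2), hb 0]
      ring

/-- The general solution of the second-order linear difference equation
`x (n+2) = b n * x (n+1) + a n * x n` in terms of sums over sparse subsets. -/
theorem general_solution_degree_two (a b x : ℕ → ℂ)
    (hb : ∀ i, b i ≠ 0)
    (hx : ∀ n, x (n + 2) = b n * x (n + 1) + a n * x n) :
    ∀ n, 2 ≤ n →
      x n = (∏ i ∈ Finset.range (n - 1), b i) *
        (x 1 * ∑ S ∈ Sp 1 (n - 2), gProd a b S +
         x 0 * (a 0 / b 0) * ∑ S ∈ Sp 2 (n - 2), gProd a b S) := by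
  intro n hn
  obtain ⟨m, rfl⟩ : ∃ m, n = m + 2 := ⟨n - 2, by omega⟩
  exact aux_sol a b x hb hx m
end

section
/- Let c ∈ ℂ not be a nonpositive integer and let z ∈ ℂ. Define x : ℕ → ℂ by x_n = (-z)^n/(c)_n · ₀F₁(c+n; z). Then x satisfies the difference equation x_{n+2} = (c+n)·x_{n+1} + z·x_n for all n ∈ ℕ. -/
open Finset

/-- Pochhammer symbol `(c)_k = c (c+1) ⋯ (c+k-1)`, with `(c)_0 = 1`. -/
noncomputable def poch (c : ℂ) (k : ℕ) : ℂ := ∏ j ∈ Finset.range k, (c + j)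

/-- The hypergeometric function `₀F₁(c; z) = ∑_{k=0}^∞ z^k / ((c)_k k!)`. -/
noncomputable def F01 (c z : ℂ) : ℂ := ∑' k : ℕ, z ^ k / (poch c k * (Nat.factorial k))

open Filter Topology

lemma poch_zero (c : ℂ) : poch c 0 = 1 := by simp [poch]


lemma poch_succ' (c : ℂ) (k : ℕ) : poch c (k + 1) = c * poch (c + 1) k := by
  rw [poch, Finset.prod_range_succ']
  rw [show (∏ i ∈ Finset.range k, (c + ↑(i + 1))) = ∏ i ∈ Finset.range k, (c + 1 + ↑i) from
    Finset.prod_congr rfl (fun j _ => by push_cast; ring)]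
  simp [poch, mul_comm]

lemma poch_succ (c : ℂ) (k : ℕ) : poch c (k + 1) = poch c k * (c + k) := by
  simp [poch, Finset.prod_range_succ]

lemma poch_ne_zero {c : ℂ} (hc : ∀ n : ℕ, c ≠ -(n : ℂ)) (k : ℕ) : poch c k ≠ 0 := by
  rw [poch]
  apply Finset.prod_ne_zero_iff.mpr
  intro j _ h
  exact hc j (by linear_combination h)

lemma summable_F01 {c : ℂ} (hc : ∀ n : ℕ, c ≠ -(n : ℂ)) (z : ℂ) :
    Summable (fun k : ℕ => z ^ k / (poch c k * (Nat.factorial k))) := by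
  by_cases hz : z = 0
  · apply summable_of_ne_finset_zero (s := {0})
    intro k hk
    simp only [Finset.mem_singleton] at hk
    rw [hz, zero_pow hk, zero_div]
  · apply summable_of_ratio_test_tendsto_lt_one (l := 0) one_pos
    · filter_upwards with k
      apply div_ne_zero (pow_ne_zero _ hz)
      exact mul_ne_zero (poch_ne_zero hc k) (by exact_mod_cast Nat.factorial_ne_zero k)
    · have key : ∀ k : ℕ, ‖(fun k : ℕ => z ^ k / (poch c k * (Nat.factorial k))) (k+1)‖ /
          ‖(fun k : ℕ => z ^ k / (poch c k * (Nat.factorial k))) k‖ =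
          ‖z‖ / (‖c + k‖ * ((k : ℝ) + 1)) := by
        intro k
        have h1 : ‖poch c k‖ ≠ 0 := norm_ne_zero_iff.mpr (poch_ne_zero hc k)
        have h2 : ‖((Nat.factorial k : ℂ))‖ ≠ 0 := by
          simp [Nat.factorial_ne_zero]
        have h5 : c + (k : ℂ) ≠ 0 := fun h => hc k (by linear_combination h)
        have h4 : ‖c + (k : ℂ)‖ ≠ 0 := norm_ne_zero_iff.mpr h5
        have hzn : ‖z‖ ≠ 0 := norm_ne_zero_iff.mpr hz
        have h3 : ‖(k : ℂ) + 1‖ = (k : ℝ) + 1 := by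
          rw [show (k:ℂ)+1 = ((k+1 : ℕ) : ℂ) by push_cast; ring, Complex.norm_natCast]
          push_cast; ring
        simp only
        rw [← norm_div]
        have heq : z ^ (k+1) / (poch c (k+1) * ((Nat.factorial (k+1) : ℕ) : ℂ)) /
            (z ^ k / (poch c k * ((Nat.factorial k : ℕ) : ℂ))) = z / ((c + k) * ((k:ℂ) + 1)) := by
          have h1' : poch c k ≠ 0 := poch_ne_zero hc k
          have h2' : ((Nat.factorial k : ℕ) : ℂ) ≠ 0 := by
            exact_mod_cast Nat.factorial_ne_zero k
          rw [poch_succ, Nat.factorial_succ, div_div_div_comm]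
          congr 1
          · rw [pow_succ, mul_comm, mul_div_assoc, div_self (pow_ne_zero k hz), mul_one]
          · push_cast
            field_simp
        rw [heq, norm_div, norm_mul, h3]
      have hten : Tendsto (fun k : ℕ => ‖z‖ / (‖c + k‖ * ((k : ℝ) + 1))) atTop (𝓝 0) := by
        apply Tendsto.div_atTop tendsto_const_nhds
        have hf : Tendsto (fun k : ℕ => (k:ℝ)+1) atTop atTop :=
          tendsto_atTop_add_const_right _ _ tendsto_natCast_atTop_atTop
        apply tendsto_atTop_mono' atTop ?_ hf
        filter_upwards [eventually_ge_atTop (⌈‖c‖⌉₊ + 1)] with k hk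
        have h1 : (1 : ℝ) ≤ ‖c + k‖ := by
          have ht := norm_sub_norm_le ((k : ℂ)) (-c)
          simp only [sub_neg_eq_add, norm_neg, Complex.norm_natCast] at ht
          have hcomm : ‖(k : ℂ) + c‖ = ‖c + (k : ℂ)‖ := by rw [add_comm]
          have hk' : (⌈‖c‖⌉₊ : ℝ) + 1 ≤ (k : ℝ) := by exact_mod_cast hk
          have hkc : ‖c‖ + 1 ≤ (k : ℝ) := le_trans (by linarith [Nat.le_ceil ‖c‖]) hk'
          rw [hcomm] at ht
          linarith
        nlinarith [Nat.cast_nonneg (α := ℝ) k]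
      exact hten.congr (fun k => (key k).symm)

lemma F01_contiguous {c : ℂ} (hc : ∀ n : ℕ, c ≠ -(n : ℂ)) (z : ℂ) :
    c * (c + 1) * (F01 c z - F01 (c + 1) z) = z * F01 (c + 2) z := by
  have hc1 : ∀ n : ℕ, c + 1 ≠ -(n : ℂ) := by
    intro n h; exact hc (1 + n) (by push_cast; linear_combination h)
  have hc2 : ∀ n : ℕ, c + 2 ≠ -(n : ℂ) := by
    intro n h; exact hc (2 + n) (by push_cast; linear_combination h)
  have S1 := summable_F01 hc z
  have S2 := summable_F01 hc1 z
  have S3 := summable_F01 hc2 z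
  set u : ℕ → ℂ := fun k =>
    z ^ k / (poch c k * (Nat.factorial k)) - z ^ k / (poch (c + 1) k * (Nat.factorial k)) with hu
  have hsu : Summable u := S1.sub S2
  have h0 : c ≠ 0 := fun h => hc 0 (by simpa using h)
  have h1 : c + 1 ≠ 0 := fun h => hc 1 (by push_cast; linear_combination h)
  have htsub : F01 c z - F01 (c + 1) z = ∑' k, u k := (S1.tsum_sub S2).symm
  have hptwise : ∀ k : ℕ, c * (c + 1) * u (k + 1) =
      z * (z ^ k / (poch (c + 2) k * (Nat.factorial k))) := by
    intro k
    have hP1 : poch (c + 1) k ≠ 0 := poch_ne_zero hc1 k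
    have hP2 : poch (c + 2) k ≠ 0 := poch_ne_zero hc2 k
    have hfac : ((Nat.factorial k : ℕ) : ℂ) ≠ 0 := by exact_mod_cast Nat.factorial_ne_zero k
    have hk1 : ((k : ℂ) + 1) ≠ 0 := by exact_mod_cast Nat.cast_add_one_ne_zero (R := ℂ) k
    have hck : c + 1 + (k : ℂ) ≠ 0 := fun h => hc1 k (by linear_combination h)
    have rel : poch (c + 1) k * (c + 1 + k) = (c + 1) * poch (c + 2) k := by
      rw [← poch_succ]
      have e2 := poch_succ' (c + 1) k
      rw [show c + 1 + 1 = c + 2 by ring] at e2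
      exact e2
    have e3 : poch c (k + 1) = c * poch (c + 1) k := poch_succ' c k
    have e4 : poch (c + 1) (k + 1) = poch (c + 1) k * (c + 1 + k) := poch_succ (c + 1) k
    simp only [hu, e3, e4, Nat.factorial_succ, pow_succ]
    push_cast
    field_simp
    linear_combination (-(z ^ k * z * ((k : ℂ) + 1))) * rel
  calc c * (c + 1) * (F01 c z - F01 (c + 1) z)
      = c * (c + 1) * (u 0 + ∑' k, u (k + 1)) := by rw [htsub, hsu.tsum_eq_zero_add]
    _ = ∑' k, c * (c + 1) * u (k + 1) := by
        have hu0 : u 0 = 0 := by simp [hu, poch_zero]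
        rw [hu0, zero_add, tsum_mul_left]
    _ = ∑' k, z * (z ^ k / (poch (c + 2) k * (Nat.factorial k))) := by
        exact tsum_congr hptwise
    _ = z * F01 (c + 2) z := by rw [tsum_mul_left, F01]

/-- The sequence `x n = (-z)^n / (c)_n * ₀F₁(c+n; z)` satisfies the difference
equation `x (n+2) = (c+n) x (n+1) + z x n`. -/
theorem F01_difference_equation (c z : ℂ) (hc : ∀ n : ℕ, c ≠ -(n : ℂ)) :
    ∀ n : ℕ,
      (fun n : ℕ => (-z) ^ n / poch c n * F01 (c + n) z) (n + 2) =
        (c + n) * (fun n : ℕ => (-z) ^ n / poch c n * F01 (c + n) z) (n + 1) +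
          z * (fun n : ℕ => (-z) ^ n / poch c n * F01 (c + n) z) n := by
  intro n
  simp only
  have hcn : ∀ m : ℕ, c + n ≠ -(m : ℂ) := fun m h => hc (n + m) (by push_cast; linear_combination h)
  have key := F01_contiguous hcn z
  have hPn : poch c n ≠ 0 := poch_ne_zero hc n
  have h1 : c + (n : ℂ) ≠ 0 := fun h => hc n (by linear_combination h)
  have h2 : c + (n : ℂ) + 1 ≠ 0 := fun h => hcn 1 (by push_cast; linear_combination h)
  have e1 : poch c (n + 1) = poch c n * (c + n) := poch_succ c n
  have e2 : poch c (n + 2) = poch c n * (c + n) * (c + n + 1) := by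
    rw [show n + 2 = (n + 1) + 1 from rfl, poch_succ, e1]
    push_cast
    ring
  have hcast1 : ((n + 1 : ℕ) : ℂ) = (n : ℂ) + 1 := by push_cast; ring
  have hcast2 : ((n + 2 : ℕ) : ℂ) = (n : ℂ) + 2 := by push_cast; ring
  rw [hcast1, hcast2, e1, e2, show c + ((n : ℂ) + 1) = c + n + 1 by ring,
    show c + ((n : ℂ) + 2) = c + n + 2 by ring]
  field_simp
  linear_combination (-(z * (-z) ^ n)) * key
end

section
/- Let c ∈ ℂ not be a nonpositive integer, let z ∈ ℂ, and let m ≥ 1 be a natural number. Then the family indexed by sparse finite subsets S of {m, m+1, m+2, …} given by S ↦ ∏_{i∈S} z/((c+i-1)·(c+i)) is summable, and its sum equals ₀F₁(c+m-1; z). In particular (m = 1), the sum over all sparse finite subsets of the positive integers equals ₀F₁(c; z), and (m = 2) the sum over sparse finite subsets of {2, 3, …} equals ₀F₁(c+1; z). -/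
open Finset

lemma factor_lb {𝕜 : Type*} [RCLike 𝕜] (d : 𝕜) (N : ℕ) (hN : ‖d‖ ≤ N) (t j : ℕ) (ht : N + 1 ≤ t) :
    ((t : ℝ) - N) ≤ ‖d + t + j‖ := by
  have h1 : ‖(t : 𝕜) + j‖ - ‖-d‖ ≤ ‖(t:𝕜) + j - -d‖ := norm_sub_norm_le _ _
  have h2 : ‖(t : 𝕜) + (j:𝕜)‖ = ((t + j : ℕ) : ℝ) := by
    rw [← Nat.cast_add, RCLike.norm_natCast]
  have h3 : (t:𝕜) + j - -d = d + t + j := by ring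
  rw [h2, h3, norm_neg] at h1
  have : (t:ℝ) - N ≤ ((t+j:ℕ):ℝ) - ‖d‖ := by
    push_cast
    have : (0:ℝ) ≤ j := by positivity
    linarith
  linarith

lemma prod_lb {𝕜 : Type*} [RCLike 𝕜] (d : 𝕜) (N : ℕ) (hN : ‖d‖ ≤ N) (t : ℕ) (ht : N + 1 ≤ t)
    (K : ℕ) : ((t : ℝ) - N) ^ K ≤ ‖∏ j ∈ range K, (d + t + j)‖ := by
  rw [norm_prod]
  calc ((t:ℝ) - N) ^ K = ∏ _j ∈ range K, ((t:ℝ) - N) := by rw [prod_const, card_range]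
    _ ≤ ∏ j ∈ range K, ‖d + t + j‖ := by
        apply Finset.prod_le_prod
        · intro i _
          have : (N:ℝ) + 1 ≤ t := by exact_mod_cast ht
          linarith
        · intro i _; exact factor_lb d N hN t i ht

lemma tele_summable {𝕜 : Type*} [RCLike 𝕜] (d : 𝕜) (K : ℕ) (hK : 2 ≤ K) :
    Summable (fun t : ℕ => (∏ j ∈ range K, (d + t + j))⁻¹) := by
  set N : ℕ := ⌈‖d‖⌉₊ with hNdef
  have hN : ‖d‖ ≤ N := Nat.le_ceil _
  rw [← summable_nat_add_iff (N + 1)]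
  apply Summable.of_norm_bounded (g := fun s : ℕ => 1 / ((s:ℝ)+1) ^ 2)
  · have : Summable (fun n : ℕ => 1 / (n:ℝ) ^ 2) := Real.summable_one_div_nat_pow.2 one_lt_two
    have := (summable_nat_add_iff 1).2 this
    simpa using this
  · intro s
    have ht : N + 1 ≤ s + (N + 1) := by omega
    have hpl := prod_lb d N hN (s + (N+1)) ht K
    have hcast : ((s + (N+1) : ℕ) : ℝ) - N = (s:ℝ) + 1 := by push_cast; ring
    rw [hcast] at hpl
    have hs1 : (0:ℝ) < (s:ℝ) + 1 := by positivity
    have h2K : ((s:ℝ)+1) ^ 2 ≤ ((s:ℝ)+1) ^ K := by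
      apply pow_le_pow_right₀ (by linarith) hK
    rw [norm_inv]
    rw [one_div]
    apply inv_anti₀ (by positivity)
    exact le_trans h2K hpl

lemma tele_tendsto {𝕜 : Type*} [RCLike 𝕜] (d : 𝕜) (K : ℕ) (hK : 1 ≤ K) :
    Filter.Tendsto (fun t : ℕ => (∏ j ∈ range K, (d + t + j))⁻¹) Filter.atTop (nhds 0) := by
  set N : ℕ := ⌈‖d‖⌉₊ with hNdef
  have hN : ‖d‖ ≤ N := Nat.le_ceil _
  rw [tendsto_zero_iff_norm_tendsto_zero]
  apply squeeze_zero' (Filter.Eventually.of_forall (fun t => norm_nonneg _))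
    (g := fun t : ℕ => ((t:ℝ) - N)⁻¹)
  · filter_upwards [Filter.eventually_ge_atTop (N+1)] with t ht
    have hpl := prod_lb d N hN t ht K
    have h1 : (1:ℝ) ≤ (t:ℝ) - N := by
      have : (N:ℝ) + 1 ≤ t := by exact_mod_cast ht
      linarith
    have hKp : ((t:ℝ) - N) ≤ ((t:ℝ)-N) ^ K := le_self_pow₀ (by linarith) (by omega)
    rw [norm_inv]
    apply inv_anti₀ (by linarith)
    linarith
  · have h1 : Filter.Tendsto (fun t : ℕ => (t:ℝ) - N) Filter.atTop Filter.atTop :=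
      Filter.tendsto_atTop_add_const_right _ _ tendsto_natCast_atTop_atTop
    exact Filter.Tendsto.inv_tendsto_atTop h1


lemma prod_peel {R : Type*} [CommRing R] (a : R) (k : ℕ) :
    ∏ j ∈ range (k + 2), (a + j) = a * (a + 1) * ∏ j ∈ range k, (a + 2 + j) := by
  rw [prod_range_succ' (fun j => a + (j:R)) (k+1)]
  rw [prod_range_succ' (fun j => a + ((j+1 : ℕ):R)) k]
  have : ∀ j ∈ range k, a + ((j + 1 + 1 : ℕ):R) = a + 2 + j := by
    intro j _; push_cast; ring
  rw [Finset.prod_congr rfl this]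
  push_cast
  ring

lemma hasSum_inv_prod {𝕜 : Type*} [RCLike 𝕜] (d : 𝕜) (hd : ∀ j : ℕ, d + (j : 𝕜) ≠ 0) (k : ℕ) :
    HasSum (fun t : ℕ => (∏ j ∈ range (k + 2), (d + t + j))⁻¹)
      ((((k : 𝕜) + 1) * ∏ j ∈ range (k + 1), (d + j))⁻¹) := by
  have hne : ∀ t j : ℕ, d + (t:𝕜) + j ≠ 0 := by
    intro t j
    have := hd (t + j)
    push_cast at this
    rwa [← add_assoc] at this
  set g : ℕ → 𝕜 := fun t => (∏ j ∈ range (k + 1), (d + t + j))⁻¹ with hg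
  have hprodne : ∀ (t : ℕ) (K : ℕ), (∏ j ∈ range K, (d + t + j)) ≠ 0 := by
    intro t K
    exact Finset.prod_ne_zero_iff.2 (fun j _ => hne t j)
  have key : ∀ t : ℕ, (∏ j ∈ range (k + 2), (d + t + j))⁻¹
      = ((k:𝕜) + 1)⁻¹ * (g t - g (t+1)) := by
    intro t
    set a : 𝕜 := d + t with ha
    set P : 𝕜 := ∏ j ∈ range k, (a + 1 + j) with hPdef
    set B : 𝕜 := a + 1 + k with hB
    have hfac : ∀ j : ℕ, a + 1 + (j:𝕜) = d + (t+1:ℕ) + (j:𝕜) := by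
      intro j; rw [ha]; push_cast; ring
    have e1 : ∏ j ∈ range (k + 1), (d + t + j) = a * P := by
      rw [prod_range_succ' (fun j => d + t + (j:𝕜)) k]
      have : ∀ j ∈ range k, d + (t:𝕜) + ((j + 1 : ℕ):𝕜) = a + 1 + j := by
        intro j _; rw [ha]; push_cast; ring
      rw [Finset.prod_congr rfl this]
      simp only [Nat.cast_zero, add_zero]; exact mul_comm _ _
    have e1' : ∏ j ∈ range (k + 1), (d + (t+1:ℕ) + j) = P * B := by
      rw [prod_range_succ (fun j => d + ((t+1:ℕ):𝕜) + (j:𝕜)) k]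
      have : ∀ j ∈ range k, d + ((t+1:ℕ):𝕜) + (j:𝕜) = a + 1 + j := by
        intro j _; rw [ha]; push_cast; ring
      rw [Finset.prod_congr rfl this, hB]
      rw [hfac k]
    have e2 : ∏ j ∈ range (k + 2), (d + t + j) = a * (P * B) := by
      have h0 : ∏ j ∈ range (k + 2), (d + t + j) = a * (a + 1) * ∏ j ∈ range k, (a + 2 + j) :=
        prod_peel a k
      have l1 : ∏ j ∈ range (k+1), (a + 1 + j) = P * B := by
        rw [prod_range_succ]
      have l2 : ∏ j ∈ range (k+1), (a + 1 + j)
          = (∏ j ∈ range k, (a + 2 + j)) * (a + 1) := by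
        rw [prod_range_succ' (fun j => a + 1 + (j:𝕜)) k]
        have : ∀ j ∈ range k, a + 1 + ((j + 1 : ℕ):𝕜) = a + 2 + j := by
          intro j _; push_cast; ring
        rw [Finset.prod_congr rfl this]
        simp
      have hQ : (a + 1) * ∏ j ∈ range k, (a + 2 + j) = P * B := by
        rw [← l1, l2, mul_comm]
      rw [h0, mul_assoc, hQ]
    have hP : P ≠ 0 := by
      apply Finset.prod_ne_zero_iff.2
      intro j _
      rw [hfac j]
      exact hne (t+1) j
    have h1 : a ≠ 0 := by rw [ha]; simpa using hne t 0
    have hBne : B ≠ 0 := by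
      rw [hB, hfac k]
      exact hne (t+1) k
    have h4 : ((k:𝕜) + 1) ≠ 0 := by
      have := Nat.cast_add_one_ne_zero (R := 𝕜) k
      simpa using this
    rw [hg]
    simp only []
    rw [e1, e1', e2]
    have hBa : B - a = (k:𝕜) + 1 := by rw [hB]; ring
    field_simp
    rw [hBa]
  have hsummable : Summable (fun t : ℕ => (∏ j ∈ range (k + 2), (d + t + j))⁻¹) :=
    tele_summable d (k+2) (by omega)
  have hs := hsummable.hasSum
  have htendG : Filter.Tendsto g Filter.atTop (nhds 0) := tele_tendsto d (k+1) (by omega)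
  have hpartial : ∀ n : ℕ, ∑ t ∈ range n, (∏ j ∈ range (k + 2), (d + t + j))⁻¹
      = ((k:𝕜) + 1)⁻¹ * (g 0 - g n) := by
    intro n
    rw [Finset.sum_congr rfl (fun t _ => key t), ← Finset.mul_sum, Finset.sum_range_sub' g n]
  have hlim2 : Filter.Tendsto (fun n => ∑ t ∈ range n, (∏ j ∈ range (k + 2), (d + t + j))⁻¹)
      Filter.atTop (nhds (((k:𝕜) + 1)⁻¹ * (g 0 - 0))) := by
    simp only [hpartial]
    exact (Filter.Tendsto.const_mul _ ((tendsto_const_nhds).sub htendG))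
  have hlim1 := hs.tendsto_sum_nat
  have huniq : (∑' t : ℕ, (∏ j ∈ range (k + 2), (d + t + j))⁻¹) = ((k:𝕜) + 1)⁻¹ * (g 0 - 0) :=
    tendsto_nhds_unique hlim1 hlim2
  have hval : ((k:𝕜) + 1)⁻¹ * (g 0 - 0) = (((k : 𝕜) + 1) * ∏ j ∈ range (k + 1), (d + j))⁻¹ := by
    rw [sub_zero, hg]
    simp only []
    have : (∏ j ∈ range (k+1), (d + ((0:ℕ):𝕜) + j)) = ∏ j ∈ range (k+1), (d + j) := by
      apply Finset.prod_congr rfl; intro j _; push_cast; ring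
    rw [this, mul_inv]
  rw [← hval, ← huniq]
  exact hs


def IdxK (m k : ℕ) : Type :=
  {S : Finset ℕ // S.card = k ∧ (∀ i ∈ S, m ≤ i) ∧ SparseSet S}

lemma SparseSet.subset {S T : Finset ℕ} (hT : SparseSet T) (h : S ⊆ T) : SparseSet S :=
  fun i hi j hj hij => hT i (h hi) j (h hj) hij

def stepFun (m k : ℕ) (p : Σ t : ℕ, IdxK (m + t + 2) k) : IdxK m (k + 1) := by
  refine ⟨insert (m + p.1) p.2.1, ?_, ?_, ?_⟩
  · rw [Finset.card_insert_of_notMem, p.2.2.1]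
    intro h
    exact absurd (p.2.2.2.1 _ h) (by omega)
  · intro i hi
    rcases Finset.mem_insert.1 hi with h | h
    · omega
    · have := p.2.2.2.1 i h; omega
  · intro i hi j hj hij
    rcases Finset.mem_insert.1 hi with h | h <;> rcases Finset.mem_insert.1 hj with h' | h'
    · omega
    · have := p.2.2.2.1 j h'; omega
    · have := p.2.2.2.1 i h; omega
    · exact p.2.2.2.2 i h j h' hij

lemma stepFun_bij (m k : ℕ) : Function.Bijective (stepFun m k) := by
  constructor
  · rintro ⟨t₁, S₁, hc₁, hb₁, hs₁⟩ ⟨t₂, S₂, hc₂, hb₂, hs₂⟩ h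
    have heq : insert (m + t₁) S₁ = insert (m + t₂) S₂ := congrArg Subtype.val h
    have ht : t₁ = t₂ := by
      have h1 : m + t₁ ∈ insert (m + t₂) S₂ := heq ▸ Finset.mem_insert_self _ _
      have h2 : m + t₂ ∈ insert (m + t₁) S₁ := heq.symm ▸ Finset.mem_insert_self _ _
      rcases Finset.mem_insert.1 h1 with h' | h'
      · omega
      · have := hb₂ _ h'
        rcases Finset.mem_insert.1 h2 with h'' | h''
        · omega
        · have := hb₁ _ h''; omega
    subst ht
    have hSS : S₁ = S₂ := by
      ext i
      constructor
      · intro hi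
        have : i ∈ insert (m + t₁) S₂ := heq ▸ Finset.mem_insert_of_mem hi
        rcases Finset.mem_insert.1 this with h' | h'
        · have := hb₁ _ hi; omega
        · exact h'
      · intro hi
        have : i ∈ insert (m + t₁) S₁ := heq.symm ▸ Finset.mem_insert_of_mem hi
        rcases Finset.mem_insert.1 this with h' | h'
        · have := hb₂ _ hi; omega
        · exact h'
    subst hSS
    rfl
  · rintro ⟨S, hc, hb, hs⟩
    have hne : S.Nonempty := Finset.card_pos.1 (by omega)
    set a := S.min' hne with hadef
    have haS : a ∈ S := S.min'_mem hne
    have ham : m ≤ a := hb a haS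
    have herase : ∀ i ∈ S.erase a, a + 2 ≤ i := by
      intro i hi
      have hiS := Finset.mem_of_mem_erase hi
      have hia : i ≠ a := Finset.ne_of_mem_erase hi
      have hle : a ≤ i := S.min'_le i hiS
      have : 2 ≤ i - a := hs a haS i hiS (by omega)
      omega
    refine ⟨⟨a - m, ⟨S.erase a, ?_, ?_, hs.subset (Finset.erase_subset _ _)⟩⟩, ?_⟩
    · rw [Finset.card_erase_of_mem haS, hc]; omega
    · intro i hi
      have := herase i hi
      omega
    · apply Subtype.ext
      show insert (m + (a - m)) (S.erase a) = S
      rw [show m + (a - m) = a by omega]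
      exact Finset.insert_erase haS

noncomputable def stepEquiv (m k : ℕ) : (Σ t : ℕ, IdxK (m + t + 2) k) ≃ IdxK m (k + 1) :=
  Equiv.ofBijective _ (stepFun_bij m k)

lemma stepEquiv_apply (m k : ℕ) (p : Σ t : ℕ, IdxK (m + t + 2) k) :
    ((stepEquiv m k p) : IdxK m (k+1)).1 = insert (m + p.1) p.2.1 := rfl

def cardFun (m : ℕ) (p : Σ k : ℕ, IdxK m k) :
    {S : Finset ℕ // (∀ i ∈ S, m ≤ i) ∧ SparseSet S} :=
  ⟨p.2.1, p.2.2.2⟩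

lemma cardFun_bij (m : ℕ) : Function.Bijective (cardFun m) := by
  constructor
  · rintro ⟨k₁, S₁, hc₁, h₁⟩ ⟨k₂, S₂, hc₂, h₂⟩ h
    have heq : S₁ = S₂ := congrArg Subtype.val h
    subst heq
    have : k₁ = k₂ := by rw [← hc₁, ← hc₂]
    subst this
    rfl
  · rintro ⟨S, hS⟩
    exact ⟨⟨S.card, ⟨S, rfl, hS⟩⟩, rfl⟩

noncomputable def cardEquiv (m : ℕ) :
    (Σ k : ℕ, IdxK m k) ≃ {S : Finset ℕ // (∀ i ∈ S, m ≤ i) ∧ SparseSet S} :=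
  Equiv.ofBijective _ (cardFun_bij m)

lemma cardEquiv_apply (m : ℕ) (p : Σ k : ℕ, IdxK m k) : ((cardEquiv m) p).1 = p.2.1 := rfl


lemma summable_prod_subtype {P : Finset ℕ → Prop} (w : ℕ → ℝ) (hw : ∀ i, 0 ≤ w i)
    (hsw : Summable w) :
    Summable (fun S : {S : Finset ℕ // P S} => ∏ i ∈ S.1, w i) := by
  apply summable_of_sum_le (c := Real.exp (∑' i, w i))
  · intro S
    exact Finset.prod_nonneg (fun i _ => hw i)
  · intro u
    set U : Finset ℕ := u.biUnion (fun S => S.1) with hU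
    have hinj : Set.InjOn (fun S : {S : Finset ℕ // P S} => S.1) u := by
      intro a _ b _ h
      exact Subtype.ext h
    have h1 : ∑ S ∈ u, ∏ i ∈ S.1, w i = ∑ A ∈ u.image (fun S => S.1), ∏ i ∈ A, w i := by
      rw [Finset.sum_image]
      intro a ha b hb h
      exact Subtype.ext h
    have h2 : u.image (fun S => S.1) ⊆ U.powerset := by
      intro A hA
      rcases Finset.mem_image.1 hA with ⟨S, hS, rfl⟩
      rw [Finset.mem_powerset]
      intro i hi
      exact Finset.mem_biUnion.2 ⟨S, hS, hi⟩
    have h3 : ∑ A ∈ u.image (fun S => S.1), ∏ i ∈ A, w i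
        ≤ ∑ A ∈ U.powerset, ∏ i ∈ A, w i := by
      apply Finset.sum_le_sum_of_subset_of_nonneg h2
      intro A _ _
      exact Finset.prod_nonneg (fun i _ => hw i)
    have h4 : ∑ A ∈ U.powerset, ∏ i ∈ A, w i = ∏ i ∈ U, (w i + 1) := by
      rw [Finset.prod_add]
      apply Finset.sum_congr rfl
      intro A _
      simp
    have h5 : ∏ i ∈ U, (w i + 1) ≤ ∏ i ∈ U, Real.exp (w i) := by
      apply Finset.prod_le_prod
      · intro i _; have := hw i; linarith
      · intro i _; exact Real.add_one_le_exp _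
    have h6 : ∏ i ∈ U, Real.exp (w i) = Real.exp (∑ i ∈ U, w i) := (Real.exp_sum _ _).symm
    have h7 : Real.exp (∑ i ∈ U, w i) ≤ Real.exp (∑' i, w i) := by
      apply Real.exp_le_exp.2
      exact Summable.sum_le_tsum U (fun i _ => hw i) hsw
    calc ∑ S ∈ u, ∏ i ∈ S.1, w i = ∑ A ∈ u.image (fun S => S.1), ∏ i ∈ A, w i := h1
      _ ≤ ∑ A ∈ U.powerset, ∏ i ∈ A, w i := h3
      _ = ∏ i ∈ U, (w i + 1) := h4
      _ ≤ ∏ i ∈ U, Real.exp (w i) := h5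
      _ = Real.exp (∑ i ∈ U, w i) := h6
      _ ≤ Real.exp (∑' i, w i) := h7

lemma exists_eps (c : ℂ) (hc0 : ∀ j : ℕ, c + (j : ℂ) ≠ 0) :
    ∃ ε : ℝ, 0 < ε ∧ ε ≤ 1 ∧ ∀ j : ℕ, ε * (j + 1) ≤ ‖c + j‖ := by
  set N : ℕ := ⌈2 * ‖c‖⌉₊ + 1 with hN
  have hNc : 2 * ‖c‖ ≤ (N : ℝ) - 1 := by
    have := Nat.le_ceil (2 * ‖c‖)
    push_cast [hN]
    push_cast at this
    linarith
  set T : Finset ℝ := (range N).image (fun j : ℕ => ‖c + (j:ℂ)‖ / ((j:ℝ) + 1)) with hT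
  have hTne : T.Nonempty := by
    apply Finset.Nonempty.image
    rw [Finset.nonempty_range_iff]
    omega
  set ε₁ : ℝ := T.min' hTne with hε₁
  have hε₁pos : 0 < ε₁ := by
    obtain ⟨j, _, hj⟩ := Finset.mem_image.1 (T.min'_mem hTne)
    rw [hε₁, ← hj]
    apply div_pos
    · exact norm_pos_iff.2 (hc0 j)
    · positivity
  refine ⟨min ε₁ (1/4), by positivity, by
      have : (1:ℝ)/4 ≤ 1 := by norm_num
      exact le_trans (min_le_right _ _) this, ?_⟩
  intro j
  have hj1 : (0:ℝ) < (j:ℝ) + 1 := by positivity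
  by_cases hcase : j < N
  · have hmem : ‖c + j‖ / (j + 1) ∈ T := by
      rw [hT]
      exact Finset.mem_image.2 ⟨j, Finset.mem_range.2 hcase, rfl⟩
    have hle : ε₁ ≤ ‖c + (j:ℂ)‖ / ((j:ℝ) + 1) := T.min'_le _ hmem
    have : min ε₁ (1/4) ≤ ‖c + (j:ℂ)‖ / ((j:ℝ) + 1) := le_trans (min_le_left _ _) hle
    calc min ε₁ (1/4) * ((j:ℝ) + 1) ≤ (‖c + (j:ℂ)‖ / ((j:ℝ) + 1)) * ((j:ℝ) + 1) :=
          mul_le_mul_of_nonneg_right this (le_of_lt hj1)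
      _ = ‖c + j‖ := by field_simp
  · have hjN : (N : ℝ) ≤ j := by exact_mod_cast Nat.le_of_not_lt hcase
    have hnorm : (j : ℝ) - ‖c‖ ≤ ‖c + j‖ := by
      have h1 : ‖(j:ℂ)‖ - ‖-c‖ ≤ ‖(j:ℂ) - -c‖ := norm_sub_norm_le _ _
      rw [Complex.norm_natCast, norm_neg, sub_neg_eq_add, add_comm] at h1
      exact h1
    have h14 : min ε₁ (1/4) * ((j:ℝ) + 1) ≤ (1/4) * ((j:ℝ) + 1) :=
      mul_le_mul_of_nonneg_right (min_le_right _ _) (le_of_lt hj1)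
    linarith

lemma cmp_norm (c z : ℂ) (ε : ℝ) (hε : 0 < ε) (hεb : ∀ j : ℕ, ε * (j + 1) ≤ ‖c + j‖)
    (S : Finset ℕ) (h1 : ∀ i ∈ S, 1 ≤ i) :
    ‖∏ i ∈ S, z / ((c + i - 1) * (c + i))‖
      ≤ ∏ i ∈ S, (‖z‖ / ε ^ 2) / ((i : ℝ) * ((i : ℝ) + 1)) := by
  rw [norm_prod]
  apply Finset.prod_le_prod (fun i _ => norm_nonneg _)
  intro i hi
  have hi1 : 1 ≤ i := h1 i hi
  have hipos : (0:ℝ) < i := by exact_mod_cast hi1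
  have hA : ε * i ≤ ‖c + i - 1‖ := by
    have := hεb (i - 1)
    have hcast : ((i - 1 : ℕ) : ℂ) = (i : ℂ) - 1 := by
      push_cast [Nat.cast_sub hi1]
      ring
    have hcast2 : ((i - 1 : ℕ) : ℝ) + 1 = i := by
      push_cast [Nat.cast_sub hi1]
      ring
    rw [hcast, hcast2] at this
    rwa [show c + (i:ℂ) - 1 = c + ((i:ℂ) - 1) by ring]
  have hB : ε * ((i:ℝ) + 1) ≤ ‖c + i‖ := hεb i
  have hApos : 0 < ε * (i:ℝ) := by positivity
  have hBpos : 0 < ε * ((i:ℝ) + 1) := by positivity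
  rw [norm_div, norm_mul]
  calc ‖z‖ / (‖c + i - 1‖ * ‖c + i‖) ≤ ‖z‖ / ((ε * i) * (ε * ((i:ℝ) + 1))) := by
        apply div_le_div_of_nonneg_left (norm_nonneg z) (by positivity)
        exact mul_le_mul hA hB (le_of_lt hBpos) (norm_nonneg _)
    _ = (‖z‖ / ε ^ 2) / ((i : ℝ) * ((i : ℝ) + 1)) := by
        rw [div_div]
        congr 1
        ring


lemma L_C (c z : ℂ) (hc0 : ∀ j : ℕ, c + (j : ℂ) ≠ 0)
    (hsum : ∀ k n : ℕ, 1 ≤ n →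
      Summable (fun S : IdxK n k => ∏ i ∈ S.1, z / ((c + i - 1) * (c + i)))) :
    ∀ k n : ℕ, 1 ≤ n →
      HasSum (fun S : IdxK n k => ∏ i ∈ S.1, z / ((c + i - 1) * (c + i)))
        (z ^ k / ((∏ j ∈ range k, (c + n - 1 + j)) * (Nat.factorial k))) := by
  intro k
  induction k with
  | zero =>
    intro n hn
    have hb : ∀ b' : IdxK n 0,
        b' ≠ (⟨∅, by simp [SparseSet]⟩ : IdxK n 0) →
        (∏ i ∈ b'.1, z / ((c + i - 1) * (c + i))) = 0 := by
      intro b' hb'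
      exfalso
      apply hb'
      apply Subtype.ext
      exact Finset.card_eq_zero.1 b'.2.1
    have := hasSum_single (f := fun S : IdxK n 0 => ∏ i ∈ S.1, z / ((c + i - 1) * (c + i)))
      (⟨∅, by simp [SparseSet]⟩ : IdxK n 0) hb
    simpa using this
  | succ k IH =>
    intro n hn
    set w : ℕ → ℂ := fun i => z / ((c + i - 1) * (c + i)) with hw
    set f : IdxK n (k+1) → ℂ := fun S => ∏ i ∈ S.1, w i with hf
    set d : ℂ := c + n - 1 with hd
    have hdne : ∀ j : ℕ, d + (j:ℂ) ≠ 0 := by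
      intro j
      have := hc0 (n - 1 + j)
      rw [hd]
      rw [show ((n - 1 + j : ℕ):ℂ) = (n:ℂ) - 1 + j by push_cast [Nat.cast_sub hn]; ring] at this
      rwa [show c + (n:ℂ) - 1 + j = c + ((n:ℂ) - 1 + j) by ring]
    set e := stepEquiv n k with he
    -- fiberwise
    set V : ℕ → ℂ := fun t =>
      w (n + t) * (z ^ k / ((∏ j ∈ range k, (c + (n + t + 2 : ℕ) - 1 + j)) * (Nat.factorial k)))
      with hV
    have hfib : ∀ t : ℕ, HasSum (fun S' : IdxK (n + t + 2) k => (f ∘ e) ⟨t, S'⟩) (V t) := by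
      intro t
      have heq : (fun S' : IdxK (n + t + 2) k => (f ∘ e) ⟨t, S'⟩)
          = fun S' : IdxK (n + t + 2) k => w (n + t) * ∏ i ∈ S'.1, w i := by
        funext S'
        show f (e ⟨t, S'⟩) = _
        rw [hf]
        simp only []
        rw [stepEquiv_apply]
        rw [Finset.prod_insert]
        intro hmem
        have h2 : n + t + 2 ≤ n + t := S'.2.2.1 (n + t) hmem
        omega
      rw [heq]
      exact (IH (n + t + 2) (by omega)).mul_left _
    -- outer sum
    have houter : HasSum V (z ^ (k+1) / ((∏ j ∈ range (k+1), (c + n - 1 + j)) * (Nat.factorial (k+1)))) := by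
      have hVeq : V = fun t : ℕ => (z ^ (k+1) / (Nat.factorial k)) * (∏ j ∈ range (k+2), (d + t + j))⁻¹ := by
        funext t
        rw [hV]
        simp only []
        rw [prod_peel (d + t) k]
        have c1 : c + ((n + t : ℕ):ℂ) - 1 = d + t := by rw [hd]; push_cast; ring
        have c2 : c + ((n + t : ℕ):ℂ) = d + t + 1 := by rw [hd]; push_cast; ring
        have c3 : ∀ j ∈ range k, c + ((n + t + 2 : ℕ):ℂ) - 1 + j = d + t + 2 + j := by
          intro j _; rw [hd]; push_cast; ring
        rw [hw]
        simp only []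
        rw [c1, c2, Finset.prod_congr rfl c3]
        rw [div_mul_div_comm, mul_inv, mul_inv, ← pow_succ']
        rw [div_eq_mul_inv, div_eq_mul_inv, mul_inv, mul_inv]
        ring
      rw [hVeq]
      have := (hasSum_inv_prod d hdne k).mul_left (z ^ (k+1) / (Nat.factorial k))
      convert this using 1
      · rfl
      rw [hd]
      rw [mul_inv]
      rw [div_eq_mul_inv, div_eq_mul_inv, mul_inv]
      have hfact : ((Nat.factorial (k+1) : ℂ)) = ((k:ℂ)+1) * (Nat.factorial k) := by
        rw [Nat.factorial_succ]; push_cast; ring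
      rw [hfact]
      rw [mul_inv]
      ring
    -- gluing
    have hs : Summable f := hsum (k+1) n hn
    have hs2 : Summable (f ∘ e) := (e.summable_iff).2 hs
    have H := hs2.hasSum
    have H2 := H.sigma hfib
    have huniq := H2.unique houter
    rw [huniq] at H
    exact (e.hasSum_iff).1 H


set_option maxHeartbeats 1000000 in
/-- The sum over all sparse finite subsets `S` of `{m, m+1, m+2, …}` of
`∏_{i∈S} z/((c+i-1)(c+i))` equals `₀F₁(c+m-1; z)`. -/
theorem sparse_sum_eq_F01 (c z : ℂ) (hc : ∀ n : ℕ, c ≠ -(n : ℂ)) (m : ℕ) (hm : 1 ≤ m) :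
    HasSum
      (fun S : {S : Finset ℕ // (∀ i ∈ S, m ≤ i) ∧ SparseSet S} =>
        ∏ i ∈ S.1, z / ((c + i - 1) * (c + i)))
      (F01 (c + m - 1) z) := by
  have hc0 : ∀ j : ℕ, c + (j : ℂ) ≠ 0 := by
    intro j h
    exact hc j (by linear_combination h)
  obtain ⟨ε, hε, hε1, hεb⟩ := exists_eps c hc0
  set y : ℝ := ‖z‖ / ε ^ 2 with hy
  have hy0 : 0 ≤ y := by positivity
  -- the dominating weight
  set wR : ℕ → ℝ := fun i => y / ((i : ℝ) * ((i : ℝ) + 1)) with hwR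
  have hwR0 : ∀ i, 0 ≤ wR i := by
    intro i
    rw [hwR]
    positivity
  have hwRsum : Summable wR := by
    refine Summable.of_nonneg_of_le hwR0 (f := fun i : ℕ => y * (1 / (i:ℝ) ^ 2)) ?_ ?_
    · intro i
      rcases Nat.eq_zero_or_pos i with h0 | h1
      · subst h0; simp [hwR]
      · have hi : (0:ℝ) < i := by exact_mod_cast h1
        rw [hwR]
        simp only []
        rw [div_eq_mul_one_div y]
        apply mul_le_mul_of_nonneg_left _ hy0
        apply div_le_div_of_nonneg_left zero_le_one (by positivity)
        nlinarith
    · exact (Real.summable_one_div_nat_pow.2 one_lt_two).mul_left y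
  -- summability over any IdxK-type index
  have hsum : ∀ k n : ℕ, 1 ≤ n →
      Summable (fun S : IdxK n k => ∏ i ∈ S.1, z / ((c + i - 1) * (c + i))) := by
    intro k n hn
    apply Summable.of_norm_bounded (g := fun S : IdxK n k => ∏ i ∈ S.1, wR i)
    · exact summable_prod_subtype wR hwR0 hwRsum
    · intro S
      exact cmp_norm c z ε hε hεb S.1 (fun i hi => le_trans hn (S.2.2.1 i hi))
  have hL := L_C c z hc0 hsum
  -- full-family summability
  set f : {S : Finset ℕ // (∀ i ∈ S, m ≤ i) ∧ SparseSet S} → ℂ :=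
    fun S => ∏ i ∈ S.1, z / ((c + i - 1) * (c + i)) with hf
  have hsf : Summable f := by
    apply Summable.of_norm_bounded
      (g := fun S : {S : Finset ℕ // (∀ i ∈ S, m ≤ i) ∧ SparseSet S} => ∏ i ∈ S.1, wR i)
    · exact summable_prod_subtype wR hwR0 hwRsum
    · intro S
      exact cmp_norm c z ε hε hεb S.1 (fun i hi => le_trans hm (S.2.1 i hi))
  -- F01 series summability
  set g : ℕ → ℂ := fun k => z ^ k / (poch (c + m - 1) k * (Nat.factorial k)) with hg
  have hgsum : Summable g := by
    apply Summable.of_norm_bounded (g := fun k : ℕ => (‖z‖ / ε) ^ k / (Nat.factorial k))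
    · exact Real.summable_pow_div_factorial _
    · intro k
      rw [hg]
      simp only []
      rw [norm_div, norm_mul, norm_pow]
      have hpoch : ε ^ k * (Nat.factorial k) ≤ ‖poch (c + m - 1) k‖ := by
        rw [poch, norm_prod]
        have : ε ^ k * ((Nat.factorial k : ℝ)) = ∏ j ∈ range k, (ε * ((j:ℝ) + 1)) := by
          rw [Finset.prod_mul_distrib, Finset.prod_const, card_range]
          congr 1
          induction k with
          | zero => simp
          | succ k ih =>
            rw [prod_range_succ, ← ih, Nat.factorial_succ]
            push_cast
            ring
        rw [this]
        apply Finset.prod_le_prod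
        · intro j _
          positivity
        · intro j _
          have := hεb (m - 1 + j)
          have hc1 : c + (m:ℂ) - 1 + j = c + ((m - 1 + j : ℕ) : ℂ) := by
            push_cast [Nat.cast_sub hm]
            ring
          rw [hc1]
          refine le_trans ?_ this
          apply mul_le_mul_of_nonneg_left _ (le_of_lt hε)
          push_cast
          have : (0:ℝ) ≤ ((m - 1 : ℕ):ℝ) := by positivity
          linarith
      have hden : (0:ℝ) < ε ^ k * (Nat.factorial k) := by positivity
      have hnorm : ‖((Nat.factorial k : ℂ))‖ = ((Nat.factorial k : ℝ)) := by
        rw [show ((Nat.factorial k : ℂ)) = ((Nat.factorial k : ℕ) : ℂ) by push_cast; rfl]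
        rw [Complex.norm_natCast]
      rw [hnorm]
      calc ‖z‖ ^ k / (‖poch (c + m - 1) k‖ * (Nat.factorial k))
          ≤ ‖z‖ ^ k / ((ε ^ k * (Nat.factorial k)) * (Nat.factorial k)) := by
            apply div_le_div_of_nonneg_left (by positivity) (by positivity)
            apply mul_le_mul_of_nonneg_right hpoch (by positivity)
        _ ≤ (‖z‖ / ε) ^ k / (Nat.factorial k) := by
            rw [div_pow, div_div, div_le_div_iff₀ (by positivity) (by positivity)]
            have h1 : (1:ℝ) ≤ (Nat.factorial k : ℝ) := by
              exact_mod_cast Nat.one_le_iff_ne_zero.2 (Nat.factorial_ne_zero k)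
            have h1 : (1:ℝ) ≤ (Nat.factorial k : ℝ) := by
              exact_mod_cast Nat.one_le_iff_ne_zero.2 (Nat.factorial_ne_zero k)
            apply mul_le_mul_of_nonneg_left _ (pow_nonneg (norm_nonneg z) k)
            exact le_mul_of_one_le_right (le_of_lt (by positivity)) h1
  have hgHasSum : HasSum g (F01 (c + m - 1) z) := by
    have := hgsum.hasSum
    rwa [show F01 (c + m - 1) z = ∑' k, g k from rfl]
  -- glue
  set e := cardEquiv m with he
  have hs2 : Summable (f ∘ e) := (e.summable_iff).2 hsf
  have H := hs2.hasSum
  have hfib : ∀ k : ℕ, HasSum (fun S : IdxK m k => (f ∘ e) ⟨k, S⟩) (g k) := by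
    intro k
    have heq : (fun S : IdxK m k => (f ∘ e) ⟨k, S⟩)
        = fun S : IdxK m k => ∏ i ∈ S.1, z / ((c + i - 1) * (c + i)) := by
      funext S
      show f (e ⟨k, S⟩) = _
      rw [hf]
      simp only []
      rw [he, cardEquiv_apply]
    rw [heq, hg]
    simp only [poch]
    exact hL k m hm
  have H2 := H.sigma hfib
  have huniq := H2.unique hgHasSum
  rw [huniq] at H
  exact (e.hasSum_iff).1 H
end

section
/- Let q, z ∈ ℂ with |q| < 1. For n ∈ ℕ define H_n = Σ_{k=0}^∞ q^{k² + nk}·z^k/(q)_k (this series converges absolutely). Then for every n ∈ ℕ, H_n = H_{n+1} + z·q^{n+1}·H_{n+2}. -/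
open Finset

/-- q-Pochhammer symbol `(q)_k = ∏_{j=1}^k (1 - q^j)`, with `(q)_0 = 1`. -/
noncomputable def qPoch (q : ℂ) (k : ℕ) : ℂ := ∏ j ∈ Finset.range k, (1 - q ^ (j + 1))

/-- `H n = ∑_{k=0}^∞ q^{k² + nk} z^k / (q)_k`. -/
noncomputable def Hfun (q z : ℂ) (n : ℕ) : ℂ :=
  ∑' k : ℕ, q ^ (k ^ 2 + n * k) * z ^ k / qPoch q k

lemma one_sub_pow_ne_zero {q : ℂ} (hq : ‖q‖ < 1) (j : ℕ) :
    (1 : ℂ) - q ^ (j + 1) ≠ 0 := by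
  intro h
  have h1 : q ^ (j + 1) = 1 := by linear_combination -h
  have h2 : ‖q ^ (j + 1)‖ = 1 := by rw [h1]; simp
  rw [norm_pow] at h2
  have h3 : ‖q‖ ^ (j + 1) < 1 :=
    pow_lt_one₀ (norm_nonneg q) hq (Nat.succ_ne_zero j)
  rw [h2] at h3
  exact lt_irrefl 1 h3

lemma qPoch_ne_zero {q : ℂ} (hq : ‖q‖ < 1) (k : ℕ) : qPoch q k ≠ 0 :=
  Finset.prod_ne_zero_iff.mpr fun j _ => one_sub_pow_ne_zero hq j

lemma qPoch_succ (q : ℂ) (k : ℕ) : qPoch q (k + 1) = qPoch q k * (1 - q ^ (k + 1)) :=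
  Finset.prod_range_succ _ _

lemma summable_H {q : ℂ} (z : ℂ) (hq : ‖q‖ < 1) (n : ℕ) :
    Summable (fun k : ℕ => q ^ (k ^ 2 + n * k) * z ^ k / qPoch q k) := by
  set f : ℕ → ℂ := fun k => q ^ (k ^ 2 + n * k) * z ^ k / qPoch q k with hf
  apply summable_of_ratio_norm_eventually_le (r := 1/2) (by norm_num)
  have hq1 : (0:ℝ) < 1 - ‖q‖ := by linarith
  -- ratio formula
  have hratio : ∀ k : ℕ, f (k + 1) = f k * (q ^ (2 * k + 1 + n) * z / (1 - q ^ (k + 1))) := by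
    intro k
    have h1 := qPoch_ne_zero hq k
    have h2 := one_sub_pow_ne_zero hq k
    simp only [hf]
    rw [qPoch_succ]
    have hpow : q ^ ((k + 1) ^ 2 + n * (k + 1)) = q ^ (k ^ 2 + n * k) * q ^ (2 * k + 1 + n) := by
      rw [← pow_add]; ring_nf
    rw [hpow]
    field_simp
    ring
  -- bound on the ratio
  have hb : ∀ k : ℕ, ‖q ^ (2 * k + 1 + n) * z / (1 - q ^ (k + 1))‖ ≤
      (‖q‖ ^ 2) ^ k * (‖z‖ / (1 - ‖q‖)) := by
    intro k
    rw [norm_div, norm_mul, norm_pow]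
    have hden : 1 - ‖q‖ ≤ ‖1 - q ^ (k + 1)‖ := by
      have := norm_sub_norm_le (1:ℂ) (q ^ (k + 1))
      simp only [norm_one, norm_pow] at this ⊢
      have hle : ‖q‖ ^ (k + 1) ≤ ‖q‖ :=
        pow_le_of_le_one (norm_nonneg q) hq.le (Nat.succ_ne_zero k)
      calc 1 - ‖q‖ ≤ 1 - ‖q‖ ^ (k + 1) := by linarith
        _ ≤ ‖1 - q ^ (k + 1)‖ := this
    have hnum : ‖q‖ ^ (2 * k + 1 + n) ≤ ‖q‖ ^ (2 * k) := by
      apply pow_le_pow_of_le_one (norm_nonneg q) hq.le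
      omega
    have hz : (0:ℝ) ≤ ‖z‖ := norm_nonneg z
    rw [div_le_iff₀ (lt_of_lt_of_le hq1 hden)] at *
    calc ‖q‖ ^ (2 * k + 1 + n) * ‖z‖
        ≤ ‖q‖ ^ (2 * k) * ‖z‖ := by
          exact mul_le_mul_of_nonneg_right hnum hz
      _ = (‖q‖ ^ 2) ^ k * ‖z‖ := by rw [← pow_mul]
      _ ≤ (‖q‖ ^ 2) ^ k * (‖z‖ / (1 - ‖q‖)) *
          ‖1 - q ^ (k + 1)‖ := by
          have h1 : (0:ℝ) ≤ (‖q‖ ^ 2) ^ k := by positivity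
          have : ‖z‖ ≤ ‖z‖ / (1 - ‖q‖) *
              ‖1 - q ^ (k + 1)‖ := by
            rw [div_mul_eq_mul_div, le_div_iff₀ hq1]
            exact mul_le_mul_of_nonneg_left hden hz
          calc (‖q‖ ^ 2) ^ k * ‖z‖
              ≤ (‖q‖ ^ 2) ^ k * (‖z‖ / (1 - ‖q‖) *
                ‖1 - q ^ (k + 1)‖) := mul_le_mul_of_nonneg_left this h1
            _ = _ := by ring
  -- the bound tends to 0
  have htend : Filter.Tendsto
      (fun k : ℕ => (‖q‖ ^ 2) ^ k * (‖z‖ / (1 - ‖q‖)))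
      Filter.atTop (nhds 0) := by
    have : Filter.Tendsto (fun k : ℕ => (‖q‖ ^ 2) ^ k) Filter.atTop (nhds 0) := by
      apply tendsto_pow_atTop_nhds_zero_of_lt_one (by positivity)
      nlinarith [norm_nonneg q]
    simpa using this.mul_const (‖z‖ / (1 - ‖q‖))
  have hev : ∀ᶠ k : ℕ in Filter.atTop,
      (‖q‖ ^ 2) ^ k * (‖z‖ / (1 - ‖q‖)) ≤ 1/2 := by
    have := htend.eventually (eventually_le_nhds (by norm_num : (0:ℝ) < 1/2))
    exact this.mono fun k hk => hk
  filter_upwards [hev] with k hk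
  rw [hratio k]
  rw [norm_mul]
  calc ‖f k‖ * ‖q ^ (2 * k + 1 + n) * z / (1 - q ^ (k + 1))‖
      ≤ ‖f k‖ * (1/2) := by
        apply mul_le_mul_of_nonneg_left _ (norm_nonneg _)
        exact le_trans (hb k) hk
    _ = 1/2 * ‖f k‖ := by ring

/-- The Rogers–Ramanujan functional equation `H n = H (n+1) + z q^{n+1} H (n+2)`. -/
theorem Hfun_rec (q z : ℂ) (hq : ‖q‖ < 1) :
    ∀ n : ℕ, Hfun q z n = Hfun q z (n + 1) + z * q ^ (n + 1) * Hfun q z (n + 2) := by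
  intro n
  set f : ℕ → ℕ → ℂ := fun m k => q ^ (k ^ 2 + m * k) * z ^ k / qPoch q k with hfdef
  have hs : ∀ m : ℕ, Summable (f m) := fun m => summable_H z hq m
  have hg : Summable (fun k => f n k - f (n + 1) k) := (hs n).sub (hs (n + 1))
  have hdiff : Hfun q z n - Hfun q z (n + 1) = ∑' k, (f n k - f (n + 1) k) :=
    (Summable.tsum_sub (hs n) (hs (n + 1))).symm
  have h0 : f n 0 - f (n + 1) 0 = 0 := by simp [hfdef, qPoch]
  have hsucc : ∀ j : ℕ, f n (j + 1) - f (n + 1) (j + 1) = z * q ^ (n + 1) * f (n + 2) j := by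
    intro j
    have h1 := qPoch_ne_zero hq j
    have h2 := one_sub_pow_ne_zero hq j
    simp only [hfdef]
    rw [qPoch_succ]
    have hp1 : q ^ ((j+1)^2 + n * (j+1)) = q ^ (j^2 + (n+2)*j) * q ^ (n + 1) := by
      rw [← pow_add]; ring_nf
    have hp2 : q ^ ((j+1)^2 + (n+1) * (j+1)) =
        q ^ (j^2 + (n+2)*j) * q ^ (n + 1) * q ^ (j + 1) := by
      rw [← pow_add, ← pow_add]; ring_nf
    rw [hp1, hp2]
    field_simp
    ring
  have hshift : ∑' k, (f n k - f (n + 1) k)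
      = (f n 0 - f (n + 1) 0) + ∑' j, (f n (j + 1) - f (n + 1) (j + 1)) :=
    Summable.tsum_eq_zero_add hg
  have htail : ∑' j, (f n (j + 1) - f (n + 1) (j + 1)) = z * q ^ (n + 1) * Hfun q z (n + 2) := by
    rw [tsum_congr hsucc]
    exact tsum_mul_left
  have : Hfun q z n - Hfun q z (n + 1) = z * q ^ (n + 1) * Hfun q z (n + 2) := by
    rw [hdiff, hshift, h0, htail, zero_add]
  linear_combination this
end

section
/- Let q, z ∈ ℂ with |q| < 1 and suppose Σ_{k=0}^∞ q^{k²}·z^k/(q)_k ≠ 0. Define a, b : ℕ → ℂ by a_0 = 1, a_n = q^n·z for n ≥ 1, and b_n = 1 for all n, and let A, B be the canonical numerators and denominators of the continued fraction K(a_n/b_n) = 1/(1 + qz/(1 + q²z/(1 + ⋯))). Then the approximants A_n/B_n converge to (Σ_{k=0}^∞ q^{k(k+1)}·z^k/(q)_k)/(Σ_{k=0}^∞ q^{k²}·z^k/(q)_k) as n → ∞ (the Rogers–Ramanujan continued fraction expansion). -/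
open Finset Filter Topology

/-- Canonical numerators of the continued fraction `K (a n / b n)`. -/
noncomputable def contA (a b : ℕ → ℂ) : ℕ → ℂ
  | 0 => 0
  | 1 => a 0
  | (n + 2) => b (n + 1) * contA a b (n + 1) + a (n + 1) * contA a b n

/-- Canonical denominators of the continued fraction `K (a n / b n)`. -/
noncomputable def contB (a b : ℕ → ℂ) : ℕ → ℂ
  | 0 => 1
  | 1 => b 0
  | (n + 2) => b (n + 1) * contB a b (n + 1) + a (n + 1) * contB a b n

namespace RRaux

/-- The general term of the Rogers–Ramanujan series. -/
noncomputable def term (q t : ℂ) (k : ℕ) : ℂ := q ^ (k ^ 2) * t ^ k / qPoch q k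

/-- The Rogers–Ramanujan series `F(t) = ∑ q^{k²} t^k/(q)_k`. -/
noncomputable def F (q t : ℂ) : ℂ := ∑' k : ℕ, term q t k

variable {q : ℂ}

lemma qPoch_norm_lb (hq : ‖q‖ < 1) (k : ℕ) : (1 - ‖q‖) ^ k ≤ ‖qPoch q k‖ := by
  have hq0 : (0 : ℝ) ≤ ‖q‖ := norm_nonneg q
  induction k with
  | zero => simp [qPoch]
  | succ n ih =>
    have h2 : ‖q ^ (n + 1)‖ ≤ ‖q‖ := by
      rw [norm_pow]
      calc ‖q‖ ^ (n + 1) ≤ ‖q‖ ^ 1 := pow_le_pow_of_le_one hq0 hq.le (by omega)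
        _ = ‖q‖ := pow_one _
    have h1 : 1 - ‖q‖ ≤ ‖(1 : ℂ) - q ^ (n + 1)‖ := by
      calc 1 - ‖q‖ ≤ ‖(1 : ℂ)‖ - ‖q ^ (n + 1)‖ := by rw [norm_one]; linarith
        _ ≤ ‖(1 : ℂ) - q ^ (n + 1)‖ := norm_sub_norm_le _ _
    have hgoal : ‖qPoch q (n + 1)‖ = ‖qPoch q n‖ * ‖(1 : ℂ) - q ^ (n + 1)‖ := by
      simp only [qPoch, Finset.prod_range_succ, norm_mul]
    rw [hgoal, pow_succ]
    exact mul_le_mul ih h1 (by linarith) (norm_nonneg _)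

lemma qPoch_ne_zero (hq : ‖q‖ < 1) (k : ℕ) : qPoch q k ≠ 0 := by
  have h := qPoch_norm_lb hq k
  have hp : (0 : ℝ) < (1 - ‖q‖) ^ k := pow_pos (by linarith) k
  intro h0
  rw [h0, norm_zero] at h
  linarith

lemma summable_qpow (hq : ‖q‖ < 1) {r : ℝ} (hr : 0 ≤ r) :
    Summable (fun k : ℕ => ‖q‖ ^ (k ^ 2) * r ^ k) := by
  have hq0 : (0 : ℝ) ≤ ‖q‖ := norm_nonneg q
  apply Summable.of_norm_bounded_eventually_nat (g := fun k => (1 / 2 : ℝ) ^ k)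
    (summable_geometric_of_lt_one (by norm_num) (by norm_num))
  have hlim : Tendsto (fun k : ℕ => ‖q‖ ^ k * r) atTop (𝓝 0) := by
    simpa using (tendsto_pow_atTop_nhds_zero_of_lt_one hq0 hq).mul_const r
  filter_upwards [hlim.eventually (eventually_le_nhds (by norm_num : (0:ℝ) < 1/2))] with k hk
  have hb : (0 : ℝ) ≤ ‖q‖ ^ k * r := mul_nonneg (pow_nonneg hq0 k) hr
  have : ‖q‖ ^ (k ^ 2) * r ^ k = (‖q‖ ^ k * r) ^ k := by
    rw [mul_pow, ← pow_mul, sq]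
  rw [Real.norm_eq_abs, abs_of_nonneg (mul_nonneg (pow_nonneg hq0 _) (pow_nonneg hr _)), this]
  exact pow_le_pow_left₀ hb hk k

lemma norm_term_le (hq : ‖q‖ < 1) (t : ℂ) (k : ℕ) :
    ‖term q t k‖ ≤ ‖q‖ ^ (k ^ 2) * (‖t‖ / (1 - ‖q‖)) ^ k := by
  have hq1 : (0 : ℝ) < 1 - ‖q‖ := by linarith
  have hlb := qPoch_norm_lb hq k
  have hPpos : (0 : ℝ) < ‖qPoch q k‖ := lt_of_lt_of_le (pow_pos hq1 k) hlb
  rw [term, norm_div, norm_mul, norm_pow, norm_pow, div_pow, mul_div_assoc]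
  apply mul_le_mul_of_nonneg_left _ (pow_nonneg (norm_nonneg q) _)
  exact div_le_div₀ (pow_nonneg (norm_nonneg t) k) le_rfl (pow_pos hq1 k) hlb

lemma summable_term (hq : ‖q‖ < 1) (t : ℂ) : Summable (term q t) := by
  have hq1 : (0 : ℝ) < 1 - ‖q‖ := by linarith
  exact Summable.of_norm_bounded
    (summable_qpow hq (div_nonneg (norm_nonneg t) hq1.le)) (norm_term_le hq t)

lemma term_succ_sub (hq : ‖q‖ < 1) (t : ℂ) (k : ℕ) :
    term q t (k + 1) - term q (q * t) (k + 1) = q * t * term q (q ^ 2 * t) k := by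
  have h0 := qPoch_ne_zero hq k
  have hP : qPoch q (k + 1) = qPoch q k * (1 - q ^ (k + 1)) := by
    simp only [qPoch, Finset.prod_range_succ]
  have hq1 : (1 : ℂ) - q ^ (k + 1) ≠ 0 := by
    intro h
    exact qPoch_ne_zero hq (k + 1) (by rw [hP, h, mul_zero])
  rw [term, term, term, hP]
  field_simp
  ring

lemma funcEq (hq : ‖q‖ < 1) (t : ℂ) : F q t = F q (q * t) + q * t * F q (q ^ 2 * t) := by
  have h1 := summable_term hq t
  have h2 := summable_term hq (q * t)
  have h3 := summable_term hq (q ^ 2 * t)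
  have hd : Summable (fun k => term q t k - term q (q * t) k) := h1.sub h2
  have key : F q t - F q (q * t) = q * t * F q (q ^ 2 * t) := by
    rw [F, F, ← Summable.tsum_sub h1 h2, Summable.tsum_eq_zero_add hd]
    have h00 : term q t 0 - term q (q * t) 0 = 0 := by simp [term]
    rw [h00, zero_add]
    calc (∑' k : ℕ, (term q t (k + 1) - term q (q * t) (k + 1)))
        = ∑' k : ℕ, q * t * term q (q ^ 2 * t) k :=
          tsum_congr fun k => term_succ_sub hq t k
      _ = q * t * F q (q ^ 2 * t) := by rw [F, tsum_mul_left]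
  linear_combination key

lemma norm_term_succ_le (hq : ‖q‖ < 1) {w z : ℂ} (hwz : ‖w‖ ≤ ‖z‖) (k : ℕ) :
    ‖term q w (k + 1)‖ ≤ ‖w‖ * (‖q‖ ^ ((k + 1) ^ 2) * ‖z‖ ^ k / (1 - ‖q‖) ^ (k + 1)) := by
  have hq1 : (0 : ℝ) < 1 - ‖q‖ := by linarith
  have hlb := qPoch_norm_lb hq (k + 1)
  calc ‖term q w (k + 1)‖ = ‖q‖ ^ ((k + 1) ^ 2) * ‖w‖ ^ (k + 1) / ‖qPoch q (k + 1)‖ := by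
        rw [term, norm_div, norm_mul, norm_pow, norm_pow]
    _ ≤ ‖q‖ ^ ((k + 1) ^ 2) * (‖w‖ * ‖z‖ ^ k) / (1 - ‖q‖) ^ (k + 1) := by
        apply div_le_div₀ (mul_nonneg (pow_nonneg (norm_nonneg q) _)
          (mul_nonneg (norm_nonneg w) (pow_nonneg (norm_nonneg z) _))) _
          (pow_pos hq1 _) hlb
        apply mul_le_mul_of_nonneg_left _ (pow_nonneg (norm_nonneg q) _)
        rw [pow_succ']
        exact mul_le_mul_of_nonneg_left (pow_le_pow_left₀ (norm_nonneg w) hwz k) (norm_nonneg w)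
    _ = ‖w‖ * (‖q‖ ^ ((k + 1) ^ 2) * ‖z‖ ^ k / (1 - ‖q‖) ^ (k + 1)) := by ring

set_option maxHeartbeats 1000000 in
lemma u_close (hq : ‖q‖ < 1) (z : ℂ) :
    ∃ S : ℝ, 0 ≤ S ∧ ∀ n : ℕ, ‖F q (q ^ n * z) - 1‖ ≤ ‖q‖ ^ n * S := by
  have hq0 : (0 : ℝ) ≤ ‖q‖ := norm_nonneg q
  have hq1 : (0 : ℝ) < 1 - ‖q‖ := by linarith
  set C : ℕ → ℝ := fun k => ‖q‖ ^ ((k + 1) ^ 2) * ‖z‖ ^ k / (1 - ‖q‖) ^ (k + 1) with hC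
  have hCnonneg : ∀ k, 0 ≤ C k := fun k =>
    div_nonneg (mul_nonneg (pow_nonneg hq0 _) (pow_nonneg (norm_nonneg z) _)) (pow_pos hq1 _).le
  have hCsum : Summable C := by
    have hle : ∀ k : ℕ, C k ≤ (1 / (1 - ‖q‖)) * (‖q‖ ^ (k ^ 2) * (‖z‖ / (1 - ‖q‖)) ^ k) := by
      intro k
      have h1 : ‖q‖ ^ ((k + 1) ^ 2) ≤ ‖q‖ ^ (k ^ 2) :=
        pow_le_pow_of_le_one hq0 hq.le (Nat.pow_le_pow_left (Nat.le_succ k) 2)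
      have h2 : C k = ‖q‖ ^ ((k + 1) ^ 2) * ((1 / (1 - ‖q‖)) * (‖z‖ / (1 - ‖q‖)) ^ k) := by
        rw [hC, div_pow]
        field_simp
        ring
      rw [h2]
      have h3 : (0 : ℝ) ≤ (1 / (1 - ‖q‖)) * (‖z‖ / (1 - ‖q‖)) ^ k :=
        mul_nonneg (by positivity) (pow_nonneg (div_nonneg (norm_nonneg z) hq1.le) k)
      calc ‖q‖ ^ ((k + 1) ^ 2) * ((1 / (1 - ‖q‖)) * (‖z‖ / (1 - ‖q‖)) ^ k)
          ≤ ‖q‖ ^ (k ^ 2) * ((1 / (1 - ‖q‖)) * (‖z‖ / (1 - ‖q‖)) ^ k) :=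
            mul_le_mul_of_nonneg_right h1 h3
        _ = (1 / (1 - ‖q‖)) * (‖q‖ ^ (k ^ 2) * (‖z‖ / (1 - ‖q‖)) ^ k) := by ring
    exact Summable.of_nonneg_of_le hCnonneg hle
      ((summable_qpow hq (div_nonneg (norm_nonneg z) hq1.le)).mul_left _)
  refine ⟨‖z‖ * ∑' k, C k, mul_nonneg (norm_nonneg z) (tsum_nonneg hCnonneg), fun n => ?_⟩
  set w : ℂ := q ^ n * z with hw
  have hwz : ‖w‖ ≤ ‖z‖ := by
    rw [hw, norm_mul, norm_pow]
    calc ‖q‖ ^ n * ‖z‖ ≤ 1 * ‖z‖ :=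
          mul_le_mul_of_nonneg_right (pow_le_one₀ hq0 hq.le) (norm_nonneg z)
      _ = ‖z‖ := one_mul _
  have hsum := summable_term hq w
  have h0 : term q w 0 = 1 := by simp [term, qPoch]
  have hsplit : F q w - 1 = ∑' k : ℕ, term q w (k + 1) := by
    rw [F, Summable.tsum_eq_zero_add hsum, h0]
    ring
  have hnormsum : Summable fun k => ‖term q w (k + 1)‖ :=
    (summable_nat_add_iff 1).2 hsum.norm
  have hbound : ∀ k, ‖term q w (k + 1)‖ ≤ ‖w‖ * C k := fun k => norm_term_succ_le hq hwz k
  calc ‖F q (q ^ n * z) - 1‖ = ‖∑' k : ℕ, term q w (k + 1)‖ := by rw [← hw, hsplit]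
    _ ≤ ∑' k : ℕ, ‖term q w (k + 1)‖ := norm_tsum_le_tsum_norm hnormsum
    _ ≤ ∑' k : ℕ, ‖w‖ * C k := Summable.tsum_le_tsum hbound hnormsum (hCsum.mul_left _)
    _ = ‖w‖ * ∑' k, C k := tsum_mul_left
    _ = ‖q‖ ^ n * (‖z‖ * ∑' k, C k) := by rw [hw, norm_mul, norm_pow]; ring

end RRaux

open RRaux in
/-- The Rogers–Ramanujan continued fraction expansion: the approximants of
`1/(1 + qz/(1 + q²z/(1 + ⋯)))` converge to
`(∑ q^{k(k+1)} z^k/(q)_k)/(∑ q^{k²} z^k/(q)_k)`. -/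
theorem rogers_ramanujan_expansion (q z : ℂ) (hq : ‖q‖ < 1)
    (hne : (∑' k : ℕ, q ^ (k ^ 2) * z ^ k / qPoch q k) ≠ 0)
    (a b : ℕ → ℂ) (ha0 : a 0 = 1) (ha : ∀ n : ℕ, 1 ≤ n → a n = q ^ n * z)
    (hb : ∀ n : ℕ, b n = 1) :
    Tendsto (fun n => contA a b (n + 1) / contB a b (n + 1)) atTop
      (𝓝 ((∑' k : ℕ, q ^ (k * (k + 1)) * z ^ k / qPoch q k) /
            (∑' k : ℕ, q ^ (k ^ 2) * z ^ k / qPoch q k))) := by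
  have hq' : ‖q‖ < 1 := by exact hq
  have hq0 : (0 : ℝ) ≤ ‖q‖ := norm_nonneg q
  set u : ℕ → ℂ := fun n => F q (q ^ n * z) with hu
  have hurec : ∀ n : ℕ, u n = u (n + 1) + q ^ (n + 1) * z * u (n + 2) := by
    intro n
    have h := funcEq hq' (q ^ n * z)
    have e1 : q * (q ^ n * z) = q ^ (n + 1) * z := by ring
    have e2 : q ^ 2 * (q ^ n * z) = q ^ (n + 2) * z := by ring
    rw [e1, e2] at h
    exact h
  have hu0 : u 0 = ∑' k : ℕ, q ^ (k ^ 2) * z ^ k / qPoch q k := by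
    simp only [hu, pow_zero, one_mul, F, term]
  have hu1 : u 1 = ∑' k : ℕ, q ^ (k * (k + 1)) * z ^ k / qPoch q k := by
    simp only [hu, F, pow_one]
    refine tsum_congr fun k => ?_
    rw [term]
    congr 1
    rw [mul_pow, ← mul_assoc, ← pow_add]
    congr 1
    ring
  have hu0ne : u 0 ≠ 0 := by rw [hu0]; exact hne
  -- bounds for u
  obtain ⟨S, hS0, hSb⟩ := u_close hq' z
  have huD : ∀ n, ‖u n‖ ≤ 1 + S := by
    intro n
    have h1 : ‖u n‖ ≤ ‖u n - 1‖ + ‖(1 : ℂ)‖ := by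
      calc ‖u n‖ = ‖u n - 1 + 1‖ := by ring_nf
        _ ≤ ‖u n - 1‖ + ‖(1 : ℂ)‖ := norm_add_le _ _
    have h2 : ‖q‖ ^ n * S ≤ S :=
      calc ‖q‖ ^ n * S ≤ 1 * S := mul_le_mul_of_nonneg_right (pow_le_one₀ hq0 hq'.le) hS0
        _ = S := one_mul _
    have h3 := hSb n
    rw [norm_one] at h1
    simp only [hu] at h1 h3 ⊢
    linarith
  have hulim : Tendsto u atTop (𝓝 1) := by
    rw [tendsto_iff_norm_sub_tendsto_zero]
    have hz : Tendsto (fun n : ℕ => ‖q‖ ^ n * S) atTop (𝓝 0) := by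
      simpa using (tendsto_pow_atTop_nhds_zero_of_lt_one hq0 hq').mul_const S
    exact squeeze_zero (fun n => norm_nonneg _) hSb hz
  -- facts about a, b
  have haN : ∀ n : ℕ, a (n + 1) = q ^ (n + 1) * z := fun n => ha (n + 1) (by omega)
  -- uniform bound for contA / contB
  set c : ℕ → ℝ := fun j => ‖q‖ ^ (j + 1) * ‖z‖ with hc
  have hcnn : ∀ j, 0 ≤ c j := fun j => mul_nonneg (pow_nonneg hq0 _) (norm_nonneg z)
  have hcsum : Summable c := by
    apply Summable.mul_right
    exact (summable_geometric_of_lt_one hq0 hq').comp_injective (add_left_injective 1)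
  set Cb : ℝ := Real.exp (∑' j, c j) with hCb
  have hPle : ∀ n : ℕ, (∏ j ∈ Finset.range n, (1 + c j)) ≤ Cb := by
    intro n
    calc (∏ j ∈ Finset.range n, (1 + c j)) ≤ ∏ j ∈ Finset.range n, Real.exp (c j) := by
          apply Finset.prod_le_prod
          · intro j _; have := hcnn j; linarith
          · intro j _; have := Real.add_one_le_exp (c j); linarith
      _ = Real.exp (∑ j ∈ Finset.range n, c j) := by rw [Real.exp_sum]
      _ ≤ Cb := Real.exp_le_exp.2 (Summable.sum_le_tsum _ (fun j _ => hcnn j) hcsum)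
  have hCb0 : (0 : ℝ) ≤ Cb := (Real.exp_pos _).le
  have key : ∀ X : ℕ → ℂ, ‖X 0‖ ≤ 1 → ‖X 1‖ ≤ 1 →
      (∀ n, X (n + 2) = X (n + 1) + q ^ (n + 1) * z * X n) → ∀ n, ‖X n‖ ≤ Cb := by
    intro X h0 h1 hrec
    have hPnn : ∀ n : ℕ, (0 : ℝ) ≤ ∏ j ∈ Finset.range n, (1 + c j) := by
      intro n
      apply Finset.prod_nonneg
      intro j _; have := hcnn j; linarith
    have main : ∀ n : ℕ, ‖X n‖ ≤ (∏ j ∈ Finset.range n, (1 + c j)) ∧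
        ‖X (n + 1)‖ ≤ (∏ j ∈ Finset.range n, (1 + c j)) := by
      intro n
      induction n with
      | zero => exact ⟨by simpa using h0, by simpa using h1⟩
      | succ m ih =>
        obtain ⟨ih0, ih1⟩ := ih
        have hP : (∏ j ∈ Finset.range (m + 1), (1 + c j)) =
            (∏ j ∈ Finset.range m, (1 + c j)) * (1 + c m) := Finset.prod_range_succ _ _
        have hmono : (∏ j ∈ Finset.range m, (1 + c j)) ≤
            ∏ j ∈ Finset.range (m + 1), (1 + c j) := by
          rw [hP]
          have := hcnn m
          nlinarith [hPnn m]
        refine ⟨le_trans ih1 hmono, ?_⟩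
        have hnorm2 : ‖X (m + 2)‖ ≤ ‖X (m + 1)‖ + c m * ‖X m‖ := by
          rw [hrec m]
          calc ‖X (m + 1) + q ^ (m + 1) * z * X m‖
              ≤ ‖X (m + 1)‖ + ‖q ^ (m + 1) * z * X m‖ := by
                exact norm_add_le _ _
            _ = ‖X (m + 1)‖ + c m * ‖X m‖ := by
                rw [norm_mul, norm_mul, norm_pow, hc]
        calc ‖X (m + 1 + 1)‖ ≤ ‖X (m + 1)‖ + c m * ‖X m‖ := hnorm2
          _ ≤ (∏ j ∈ Finset.range m, (1 + c j)) + c m * ∏ j ∈ Finset.range m, (1 + c j) := by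
              have := hcnn m
              nlinarith [hPnn m]
          _ = ∏ j ∈ Finset.range (m + 1), (1 + c j) := by rw [hP]; ring
    intro n
    exact le_trans (main n).1 (hPle n)
  have hBbd : ∀ n, ‖contB a b n‖ ≤ Cb := by
    apply key
    · simp [contB]
    · simp [contB, hb 0]
    · intro n
      show b (n + 1) * contB a b (n + 1) + a (n + 1) * contB a b n = _
      rw [hb, haN]
      ring
  have hAbd : ∀ n, ‖contA a b n‖ ≤ Cb := by
    apply key
    · simp [contA]
    · simp [contA, ha0]
    · intro n
      show b (n + 1) * contA a b (n + 1) + a (n + 1) * contA a b n = _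
      rw [hb, haN]
      ring
  -- the key identities
  have hBid : ∀ n : ℕ, contB a b (n + 1) * u (n + 1)
      + q ^ (n + 1) * z * contB a b n * u (n + 2) = u 0 := by
    intro n
    induction n with
    | zero =>
      have hB1 : contB a b 1 = 1 := hb 0
      have hB0 : contB a b 0 = 1 := rfl
      rw [hB1, hB0]
      linear_combination (hurec 0).symm
    | succ m ih =>
      have hrecB : contB a b (m + 2) = contB a b (m + 1) + q ^ (m + 1) * z * contB a b m := by
        show b (m + 1) * contB a b (m + 1) + a (m + 1) * contB a b m = _
        rw [hb, haN]; ring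
      have h2 := hurec (m + 1)
      linear_combination ih - contB a b (m + 1) * h2 + u (m + 2) * hrecB
  have hAid : ∀ n : ℕ, contA a b (n + 1) * u (n + 1)
      + q ^ (n + 1) * z * contA a b n * u (n + 2) = u 1 := by
    intro n
    induction n with
    | zero =>
      have hA1 : contA a b 1 = 1 := ha0
      have hA0 : contA a b 0 = 0 := rfl
      rw [hA1, hA0]
      ring
    | succ m ih =>
      have hrecA : contA a b (m + 2) = contA a b (m + 1) + q ^ (m + 1) * z * contA a b m := by
        show b (m + 1) * contA a b (m + 1) + a (m + 1) * contA a b m = _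
        rw [hb, haN]; ring
      have h2 := hurec (m + 1)
      linear_combination ih - contA a b (m + 1) * h2 + u (m + 2) * hrecA
  -- limits of the products
  have herr : ∀ (X : ℕ → ℂ), (∀ n, ‖X n‖ ≤ Cb) →
      Tendsto (fun n : ℕ => q ^ (n + 1) * z * X n * u (n + 2)) atTop (𝓝 0) := by
    intro X hX
    rw [tendsto_zero_iff_norm_tendsto_zero]
    have hbnd : ∀ n : ℕ, ‖q ^ (n + 1) * z * X n * u (n + 2)‖ ≤
        ‖q‖ ^ (n + 1) * (‖z‖ * Cb * (1 + S)) := by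
      intro n
      rw [norm_mul, norm_mul, norm_mul, norm_pow]
      have h1 : ‖X n‖ * ‖u (n + 2)‖ ≤ Cb * (1 + S) := by
        have h3 := huD (n + 2)
        have h4 := hX n
        have h5 : (0:ℝ) ≤ ‖u (n+2)‖ := norm_nonneg _
        nlinarith [norm_nonneg (X n)]
      calc ‖q‖ ^ (n + 1) * ‖z‖ * ‖X n‖ * ‖u (n + 2)‖
          = ‖q‖ ^ (n + 1) * ‖z‖ * (‖X n‖ * ‖u (n + 2)‖) := by ring
        _ ≤ ‖q‖ ^ (n + 1) * ‖z‖ * (Cb * (1 + S)) := by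
            apply mul_le_mul_of_nonneg_left h1
            positivity
        _ = ‖q‖ ^ (n + 1) * (‖z‖ * Cb * (1 + S)) := by ring
    have hz : Tendsto (fun n : ℕ => ‖q‖ ^ (n + 1) * (‖z‖ * Cb * (1 + S))) atTop (𝓝 0) := by
      have h := (tendsto_pow_atTop_nhds_zero_of_lt_one hq0 hq').mul_const (‖z‖ * Cb * (1 + S))
      rw [zero_mul] at h
      exact h.comp (tendsto_add_atTop_nat 1)
    exact squeeze_zero (fun n => norm_nonneg _) hbnd hz
  have hBlim : Tendsto (fun n : ℕ => contB a b (n + 1) * u (n + 1)) atTop (𝓝 (u 0)) := by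
    have heq : ∀ n : ℕ, contB a b (n + 1) * u (n + 1) =
        u 0 - q ^ (n + 1) * z * contB a b n * u (n + 2) := by
      intro n; linear_combination hBid n
    have h := (tendsto_const_nhds (x := u 0) (f := atTop)).sub (herr (fun n => contB a b n) hBbd)
    rw [sub_zero] at h
    exact h.congr fun n => (heq n).symm
  have hAlim : Tendsto (fun n : ℕ => contA a b (n + 1) * u (n + 1)) atTop (𝓝 (u 1)) := by
    have heq : ∀ n : ℕ, contA a b (n + 1) * u (n + 1) =
        u 1 - q ^ (n + 1) * z * contA a b n * u (n + 2) := by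
      intro n; linear_combination hAid n
    have h := (tendsto_const_nhds (x := u 1) (f := atTop)).sub (herr (fun n => contA a b n) hAbd)
    rw [sub_zero] at h
    exact h.congr fun n => (heq n).symm
  have hdiv : Tendsto (fun n : ℕ => contA a b (n + 1) * u (n + 1) /
      (contB a b (n + 1) * u (n + 1))) atTop (𝓝 (u 1 / u 0)) :=
    hAlim.div hBlim hu0ne
  have hev : ∀ᶠ n : ℕ in atTop, u (n + 1) ≠ 0 :=
    (hulim.comp (tendsto_add_atTop_nat 1)).eventually_ne one_ne_zero
  have hfinal : Tendsto (fun n => contA a b (n + 1) / contB a b (n + 1)) atTop (𝓝 (u 1 / u 0)) := by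
    apply hdiv.congr'
    filter_upwards [hev] with n hn
    exact mul_div_mul_right _ _ hn
  rw [← hu1, ← hu0]
  exact hfinal
end
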